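/- Let A_1, ..., A_{n+2} be points in R^n, every n+1 of which are affinely independent (n ≥ 2), with A_{n+2} taken as the origin O. Fix a nonzero constant c. Then there exist unique points B_1, ..., B_{n+1} in R^n such that for each i ≤ n+1: (1) the vector OB_i is orthogonal to the affine hull of {A_j : j ≤ n+1, j ≠ i} translated to pass through the origin direction (i.e., orthogonal to all differences A_j - A_k for j,k ≤ n+1 distinct from i), and (2) OB_i · OA_j = c for all j ≤ n+1 with j ≠ i. Setting B_{n+2} = O, the resulting configuration B satisfies (A_i - A_j)·(B_k - B_l) = 0 for all pairwise distinct indices i, j, k, l. -/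

import Mathlib

open scoped RealInnerProductSpace
open Finset

private lemma dual_aux' {E : Type*} [NormedAddCommGroup E] [InnerProductSpace ℝ E]
    [FiniteDimensional ℝ E] {ι : Type*} [Fintype ι] (b : Module.Basis ι ℝ E) (c : ℝ) :
    ∃! x : E, ∀ j, ⟪x, b j⟫ = c := by
  refine ⟨(InnerProductSpace.toDual ℝ E).symm
      (LinearMap.toContinuousLinearMap (b.constr ℝ (fun _ => c))), fun j => ?_, fun w hw => ?_⟩
  · rw [← InnerProductSpace.toDual_apply_apply, LinearIsometryEquiv.apply_symm_apply]
    exact b.constr_basis ℝ (fun _ => c) j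
  · set x := (InnerProductSpace.toDual ℝ E).symm
      (LinearMap.toContinuousLinearMap (b.constr ℝ (fun _ => c))) with hx
    have hxj : ∀ j, ⟪x, b j⟫ = c := fun j => by
      rw [hx, ← InnerProductSpace.toDual_apply_apply, LinearIsometryEquiv.apply_symm_apply]
      exact b.constr_basis ℝ (fun _ => c) j
    have h2 : ((innerSL ℝ w : E →L[ℝ] ℝ) : E →ₗ[ℝ] ℝ) = ((innerSL ℝ x : E →L[ℝ] ℝ) : E →ₗ[ℝ] ℝ) :=
      b.ext fun j => by simp only [ContinuousLinearMap.coe_coe, innerSL_apply_apply, hw j, hxj j]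
    exact ext_inner_right ℝ fun v => by
      have := LinearMap.congr_fun h2 v
      simpa using this

theorem dual_exists_unique (n : ℕ) (hn : 2 ≤ n)
    (A : Fin (n + 2) → EuclideanSpace ℝ (Fin n))
    (hA : ∀ i : Fin (n + 2),
      AffineIndependent ℝ (fun j : {j : Fin (n + 2) // j ≠ i} => A j.val))
    (hO : A (Fin.last (n + 1)) = 0)
    (c : ℝ) (hc : c ≠ 0) :
    (∃! (B : Fin (n + 1) → EuclideanSpace ℝ (Fin n)),
      (∀ i j k : Fin (n + 1), j ≠ i → k ≠ i →
        ⟪B i, A j.castSucc - A k.castSucc⟫ = 0) ∧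
      (∀ i j : Fin (n + 1), j ≠ i → ⟪B i, A j.castSucc⟫ = c)) ∧
    (∀ B : Fin (n + 1) → EuclideanSpace ℝ (Fin n),
      ((∀ i j k : Fin (n + 1), j ≠ i → k ≠ i →
        ⟪B i, A j.castSucc - A k.castSucc⟫ = 0) ∧
       (∀ i j : Fin (n + 1), j ≠ i → ⟪B i, A j.castSucc⟫ = c)) →
      ∀ i j k l : Fin (n + 2), i ≠ j → i ≠ k → i ≠ l → j ≠ k → j ≠ l → k ≠ l →
        ⟪A i - A j, (Fin.snoc B 0 : Fin (n + 2) → EuclideanSpace ℝ (Fin n)) k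
          - (Fin.snoc B 0 : Fin (n + 2) → EuclideanSpace ℝ (Fin n)) l⟫ = 0) := by
  classical
  constructor
  · -- existence and uniqueness
    have huniq : ∀ i : Fin (n + 1), ∃! v : EuclideanSpace ℝ (Fin n),
        ∀ j : {j : Fin (n + 1) // j ≠ i}, ⟪v, A j.1.castSucc⟫ = c := by
      intro i
      set p₀ : {j : Fin (n + 2) // j ≠ i.castSucc} :=
        ⟨Fin.last (n + 1), (Fin.castSucc_lt_last i).ne'⟩ with hp₀
      have hli := (affineIndependent_iff_linearIndependent_vsub ℝ
        (fun j : {j : Fin (n + 2) // j ≠ i.castSucc} => A j.val) p₀).mp (hA i.castSucc)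
      -- transfer to the family indexed by {j : Fin (n+1) // j ≠ i}
      set e : {j : Fin (n + 1) // j ≠ i} →
          {x : {j : Fin (n + 2) // j ≠ i.castSucc} // x ≠ p₀} := fun j =>
        ⟨⟨j.1.castSucc, by simp [Fin.castSucc_inj, j.2]⟩, by
          simp only [hp₀, ne_eq, Subtype.mk.injEq]
          exact (Fin.castSucc_lt_last j.1).ne⟩ with he
      have he_inj : Function.Injective e := by
        intro a b hab
        have := congrArg (fun x => (x.1 : Fin (n + 2))) hab
        exact Subtype.ext (by simpa [he, Fin.castSucc_inj] using this)
      have hli2 : LinearIndependent ℝ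
          (fun j : {j : Fin (n + 1) // j ≠ i} => A j.1.castSucc) := by
        have h := hli.comp e he_inj
        have heq : ((fun j : {x : {j : Fin (n + 2) // j ≠ i.castSucc} // x ≠ p₀} =>
            A j.1.1 -ᵥ A p₀.1) ∘ e) =
            fun j : {j : Fin (n + 1) // j ≠ i} => A j.1.castSucc := by
          funext j
          simp [he, hp₀, hO, vsub_eq_sub]
        rwa [heq] at h
      have hcard : Fintype.card {j : Fin (n + 1) // j ≠ i} =
          Module.finrank ℝ (EuclideanSpace ℝ (Fin n)) := by
        simp [Fintype.card_subtype_compl, finrank_euclideanSpace_fin]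
      have : Nonempty {j : Fin (n + 1) // j ≠ i} := by
        haveI : Nontrivial (Fin (n + 1)) := Fin.nontrivial_iff_two_le.mpr (by omega)
        rcases exists_ne i with ⟨j, hj⟩
        exact ⟨⟨j, hj⟩⟩
      set b := basisOfLinearIndependentOfCardEqFinrank hli2 hcard with hb
      have hbc : ∀ j : {j : Fin (n + 1) // j ≠ i}, b j = A j.1.castSucc := fun j => by
        rw [hb, coe_basisOfLinearIndependentOfCardEqFinrank]
      obtain ⟨v, hv, hvu⟩ := dual_aux' b c
      refine ⟨v, fun j => by rw [← hbc j]; exact hv j, fun w hw => hvu w fun j => by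
        rw [hbc j]; exact hw j⟩
    set B : Fin (n + 1) → EuclideanSpace ℝ (Fin n) :=
      fun i => (huniq i).exists.choose with hBdef
    have hB : ∀ i j : Fin (n + 1), j ≠ i → ⟪B i, A j.castSucc⟫ = c := fun i j h =>
      (huniq i).exists.choose_spec ⟨j, h⟩
    refine ⟨B, ⟨fun i j k hj hk => ?_, hB⟩, fun B' ⟨_, hB'2⟩ => ?_⟩
    · rw [inner_sub_right, hB i j hj, hB i k hk, sub_self]
    · funext i
      exact (huniq i).unique (fun j => hB'2 i j.1 j.2) (fun j => hB i j.1 j.2)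
  · -- duality property
    rintro B ⟨_, hB2⟩ i j k l hij hik hil hjk hjl hkl
    have hc' : ∀ p q : Fin (n + 1), p ≠ q → ⟪A p.castSucc, B q⟫ = c := fun p q h => by
      rw [real_inner_comm]; exact hB2 q p h
    rcases Fin.eq_castSucc_or_eq_last i with ⟨i', rfl⟩ | rfl <;>
      rcases Fin.eq_castSucc_or_eq_last j with ⟨j', rfl⟩ | rfl <;>
        rcases Fin.eq_castSucc_or_eq_last k with ⟨k', rfl⟩ | rfl <;>
          rcases Fin.eq_castSucc_or_eq_last l with ⟨l', rfl⟩ | rfl <;>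
    first
      | (exact absurd rfl (by assumption))
      | skip
    · -- all castSucc
      have h1 : i' ≠ k' := by simpa [Fin.castSucc_inj] using hik
      have h2 : i' ≠ l' := by simpa [Fin.castSucc_inj] using hil
      have h3 : j' ≠ k' := by simpa [Fin.castSucc_inj] using hjk
      have h4 : j' ≠ l' := by simpa [Fin.castSucc_inj] using hjl
      simp only [Fin.snoc_castSucc, inner_sub_left, inner_sub_right,
        hc' i' k' h1, hc' i' l' h2, hc' j' k' h3, hc' j' l' h4]
      ring
    · -- l = last
      have h1 : i' ≠ k' := by simpa [Fin.castSucc_inj] using hik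
      have h3 : j' ≠ k' := by simpa [Fin.castSucc_inj] using hjk
      simp only [Fin.snoc_castSucc, Fin.snoc_last, sub_zero, inner_sub_left,
        hc' i' k' h1, hc' j' k' h3]
      ring
    · -- k = last
      have h2 : i' ≠ l' := by simpa [Fin.castSucc_inj] using hil
      have h4 : j' ≠ l' := by simpa [Fin.castSucc_inj] using hjl
      simp only [Fin.snoc_castSucc, Fin.snoc_last, zero_sub, inner_neg_right,
        inner_sub_left, hc' i' l' h2, hc' j' l' h4]
      ring
    · -- j = last
      have h1 : i' ≠ k' := by simpa [Fin.castSucc_inj] using hik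
      have h2 : i' ≠ l' := by simpa [Fin.castSucc_inj] using hil
      simp only [Fin.snoc_castSucc, hO, sub_zero, inner_sub_right,
        hc' i' k' h1, hc' i' l' h2]
      ring
    · -- i = last
      have h3 : j' ≠ k' := by simpa [Fin.castSucc_inj] using hjk
      have h4 : j' ≠ l' := by simpa [Fin.castSucc_inj] using hjl
      simp only [Fin.snoc_castSucc, hO, zero_sub, inner_neg_left, inner_sub_right,
        hc' j' k' h3, hc' j' l' h4]
      ring
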